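/- Assume q^{2l} = 1 where l ≥ 2 is the smallest positive integer with this property. Let (V; ρ₀, ρ₊, ρ₋, ρ_C) be a finite-dimensional irreducible representation of B over ℂ which additionally satisfies ρ_C² − λ²(ρ₋ρ₊ + q⁻¹ρ_Cρ₀ + q⁻²ρ₀²) = id (i.e. it is a representation of the quotient algebra F). Then there exist scalars c, ξ₊, ξ₋, z ∈ ℂ with ρ_C = c·id, ρ₊^l = ξ₊·id, ρ₋^l = ξ₋·id, (ρ_C − λρ₀)^l = z·id, and ξ₋·ξ₊ = q^{l(l−1)} λ^{−2l} ( −1 + q^{−l}·Q_l((q+q⁻¹)c)·z − z² ). -/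

import Mathlib

noncomputable section

namespace SL2q

/-- auxiliary scalar identity -/
private lemma aux_quad (q c u y : ℂ) (hq : q ≠ 0) (hu : u ≠ 0)
    (hb : u + u⁻¹ = (q + q⁻¹) * c) :
    (1 + q⁻¹^2)*c*y - q⁻¹^2*y^2 - 1 = -q⁻¹^2 * ((y - q*u) * (y - q*u⁻¹)) := by
  field_simp
  ring_nf
  field_simp at hb
  linear_combination (-y) * hb

/-- auxiliary scalar identity -/
private lemma aux_factor (d t w x a b : ℂ) (h : t * w = 1) :
    -d * ((t*x - a) * (t*x - b)) = (-d * t^2) * ((x - w*a) * (x - w*b)) := by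
  linear_combination (d*a*b*(t*w+1) - d*(a+b)*t*x) * h

/-- on a finite-dimensional irreducible representation of B
satisfying the relation of the quotient algebra F, i.e.
ρ_C² − λ²(ρ₋ρ₊ + q⁻¹ρ_Cρ₀ + q⁻²ρ₀²) = id, the scalars c, ξ₊, ξ₋, z by which
C, X₊^l, X₋^l, (C−λX₀)^l act satisfy
ξ₋ξ₊ = q^{l(l−1)} λ^{−2l} ( −1 + q^{−l} Q_l((q+q⁻¹)c) z − z² ), where Q_l is
the unique polynomial with Q_l(x+x⁻¹) = x^l + x^{−l}. -/
theorem central_scalars_F (q : ℂ) (hq : q ≠ 0) (hq2 : q ^ 2 ≠ 1)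
    (l : ℕ) (hl : 2 ≤ l) (hq2l : q ^ (2 * l) = 1)
    (hmin : ∀ m : ℕ, 0 < m → m < l → q ^ (2 * m) ≠ 1)
    (Q : Polynomial ℂ) (hQdeg : Q.natDegree = l)
    (hQ : ∀ x : ℂ, x ≠ 0 → Q.eval (x + x⁻¹) = x ^ l + (x⁻¹) ^ l)
    (V : Type) [AddCommGroup V] [Module ℂ V] [FiniteDimensional ℂ V]
    (ρ0 ρp ρm ρC : Module.End ℂ V)
    (h1 : (q ^ 2 : ℂ) • (ρ0 * ρp) - ρp * ρ0 = q • (ρC * ρp))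
    (h2 : (q⁻¹ ^ 2 : ℂ) • (ρ0 * ρm) - ρm * ρ0 = -(q⁻¹ • (ρC * ρm)))
    (h3 : ρp * ρm - ρm * ρp = ((q + q⁻¹) : ℂ) • ((ρC - (q - q⁻¹) • ρ0) * ρ0))
    (hc0 : Commute ρC ρ0) (hcp : Commute ρC ρp) (hcm : Commute ρC ρm)
    (hF : ρC * ρC - ((q - q⁻¹) ^ 2 : ℂ) •
        (ρm * ρp + q⁻¹ • (ρC * ρ0) + (q⁻¹ ^ 2 : ℂ) • (ρ0 * ρ0))
        = (1 : Module.End ℂ V))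
    (hnt : Nontrivial V)
    (hirr : ∀ W : Submodule ℂ V,
      (∀ v ∈ W, ρ0 v ∈ W) → (∀ v ∈ W, ρp v ∈ W) →
      (∀ v ∈ W, ρm v ∈ W) → (∀ v ∈ W, ρC v ∈ W) → W = ⊥ ∨ W = ⊤) :
    ∃ c ξp ξm z : ℂ,
      ρC = c • (1 : Module.End ℂ V) ∧
      ρp ^ l = ξp • (1 : Module.End ℂ V) ∧
      ρm ^ l = ξm • (1 : Module.End ℂ V) ∧
      (ρC - (q - q⁻¹) • ρ0) ^ l = z • (1 : Module.End ℂ V) ∧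
      ξm * ξp =
        q ^ (l * (l - 1)) * ((q - q⁻¹) ^ (2 * l))⁻¹ *
          (-1 + q⁻¹ ^ l * Q.eval ((q + q⁻¹) * c) * z - z ^ 2) := by
  classical
  have hlam : q - q⁻¹ ≠ 0 := by
    intro h
    apply hq2
    rw [sub_eq_zero] at h
    rw [sq]
    nth_rewrite 2 [h]
    exact mul_inv_cancel₀ hq
  set lam := q - q⁻¹ with hlamdef
  set A := ρC - lam • ρ0 with hAdef
  -- injectivity of scalars
  have scal_inj : ∀ a b : ℂ, a • (1 : Module.End ℂ V) = b • (1 : Module.End ℂ V) → a = b := by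
    intro a b hab
    obtain ⟨v, hv⟩ := exists_ne (0 : V)
    have h' := congrArg (fun T : Module.End ℂ V => T v) hab
    simp only [LinearMap.smul_apply, Module.End.one_apply] at h'
    exact smul_left_injective ℂ hv h'
  -- Schur's lemma
  have schur : ∀ T : Module.End ℂ V, Commute ρ0 T → Commute ρp T → Commute ρm T →
      Commute ρC T → ∃ μ : ℂ, T = μ • (1 : Module.End ℂ V) := by
    intro T t0 tp tm tC
    obtain ⟨μ, hμ⟩ := Module.End.exists_eigenvalue T
    have hne : Module.End.eigenspace T μ ≠ ⊥ := hμ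
    have inv : ∀ S : Module.End ℂ V, Commute S T →
        ∀ v ∈ Module.End.eigenspace T μ, S v ∈ Module.End.eigenspace T μ := by
      intro S hS v hv
      rw [Module.End.mem_eigenspace_iff] at hv ⊢
      have h' : T (S v) = S (T v) := by
        have heq := hS.symm.eq
        calc T (S v) = (T * S) v := rfl
          _ = (S * T) v := by rw [heq]
          _ = S (T v) := rfl
      rw [h', hv, map_smul]
    rcases hirr _ (inv ρ0 t0) (inv ρp tp) (inv ρm tm) (inv ρC tC) with h | h
    · exact absurd h hne
    · refine ⟨μ, ?_⟩
      ext v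
      have hv : v ∈ Module.End.eigenspace T μ := h ▸ Submodule.mem_top
      rw [Module.End.mem_eigenspace_iff] at hv
      simpa using hv
  obtain ⟨c, hc⟩ := schur ρC hc0.symm hcp.symm hcm.symm (Commute.refl ρC)
  have hAc : A = c • (1 : Module.End ℂ V) - lam • ρ0 := by rw [hAdef, hc]
  have h1c : ρp * ρ0 = (q^2 : ℂ) • (ρ0 * ρp) - (q*c) • ρp := by
    have h1' := h1
    rw [hc] at h1'
    simp only [smul_mul_assoc, one_mul, smul_smul] at h1'
    linear_combination (norm := module) -h1'
  have h2c : ρm * ρ0 = (q⁻¹^2 : ℂ) • (ρ0 * ρm) + (q⁻¹*c) • ρm := by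
    have h2' := h2
    rw [hc] at h2'
    simp only [smul_mul_assoc, one_mul, smul_smul] at h2'
    linear_combination (norm := module) -h2'
  have hpA : ρp * A = (q^2 : ℂ) • (A * ρp) := by
    rw [hAc]
    simp only [mul_sub, sub_mul, mul_smul_comm, smul_mul_assoc, mul_one, one_mul]
    rw [h1c]
    match_scalars <;> simp only [hlamdef] <;> field_simp [hq] <;> (try ring) <;> tauto
  have hmA : ρm * A = (q⁻¹^2 : ℂ) • (A * ρm) := by
    rw [hAc]
    simp only [mul_sub, sub_mul, mul_smul_comm, smul_mul_assoc, mul_one, one_mul]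
    rw [h2c]
    match_scalars <;> simp only [hlamdef] <;> field_simp [hq] <;> (try ring) <;> tauto
  have hAp : A * ρp = (q⁻¹^2 : ℂ) • (ρp * A) := by
    rw [hpA, smul_smul]
    have h' : (q⁻¹^2 * q^2 : ℂ) = 1 := by field_simp [hq]
    rw [h', one_smul]
  have hAm : A * ρm = (q^2 : ℂ) • (ρm * A) := by
    rw [hmA, smul_smul]
    have h' : (q^2 * q⁻¹^2 : ℂ) = 1 := by field_simp [hq]
    rw [h', one_smul]
  have hApn : ∀ n : ℕ, A * ρp^n = ((q⁻¹^2 : ℂ))^n • (ρp^n * A) := by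
    intro n
    induction n with
    | zero => simp
    | succ n ih =>
      calc A * ρp^(n+1) = (A * ρp) * ρp^n := by rw [pow_succ', ← mul_assoc]
        _ = (q⁻¹^2 : ℂ) • (ρp * (A * ρp^n)) := by rw [hAp, smul_mul_assoc, mul_assoc]
        _ = (q⁻¹^2 : ℂ) • (ρp * (((q⁻¹^2 : ℂ))^n • (ρp^n * A))) := by rw [ih]
        _ = ((q⁻¹^2 : ℂ))^(n+1) • (ρp^(n+1) * A) := by
              rw [mul_smul_comm, smul_smul, ← mul_assoc, ← pow_succ', ← pow_succ']
  have hAmn : ∀ n : ℕ, A * ρm^n = ((q^2 : ℂ))^n • (ρm^n * A) := by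
    intro n
    induction n with
    | zero => simp
    | succ n ih =>
      calc A * ρm^(n+1) = (A * ρm) * ρm^n := by rw [pow_succ', ← mul_assoc]
        _ = (q^2 : ℂ) • (ρm * (A * ρm^n)) := by rw [hAm, smul_mul_assoc, mul_assoc]
        _ = (q^2 : ℂ) • (ρm * (((q^2 : ℂ))^n • (ρm^n * A))) := by rw [ih]
        _ = ((q^2 : ℂ))^(n+1) • (ρm^(n+1) * A) := by
              rw [mul_smul_comm, smul_smul, ← mul_assoc, ← pow_succ', ← pow_succ']
  have hAkp : ∀ k : ℕ, A^k * ρp = ((q⁻¹^2 : ℂ))^k • (ρp * A^k) := by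
    intro k
    induction k with
    | zero => simp
    | succ k ih =>
      calc A^(k+1) * ρp = A^k * (A * ρp) := by rw [pow_succ, mul_assoc]
        _ = (q⁻¹^2 : ℂ) • ((A^k * ρp) * A) := by rw [hAp, mul_smul_comm, mul_assoc]
        _ = (q⁻¹^2 : ℂ) • ((((q⁻¹^2 : ℂ))^k • (ρp * A^k)) * A) := by rw [ih]
        _ = ((q⁻¹^2 : ℂ))^(k+1) • (ρp * A^(k+1)) := by
              rw [smul_mul_assoc, smul_smul, mul_assoc, ← pow_succ, ← pow_succ']
  have hAkm : ∀ k : ℕ, A^k * ρm = ((q^2 : ℂ))^k • (ρm * A^k) := by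
    intro k
    induction k with
    | zero => simp
    | succ k ih =>
      calc A^(k+1) * ρm = A^k * (A * ρm) := by rw [pow_succ, mul_assoc]
        _ = (q^2 : ℂ) • ((A^k * ρm) * A) := by rw [hAm, mul_smul_comm, mul_assoc]
        _ = (q^2 : ℂ) • ((((q^2 : ℂ))^k • (ρm * A^k)) * A) := by rw [ih]
        _ = ((q^2 : ℂ))^(k+1) • (ρm * A^(k+1)) := by
              rw [smul_mul_assoc, smul_smul, mul_assoc, ← pow_succ, ← pow_succ']
  -- root of unity facts
  have hx : (q⁻¹^2 : ℂ) = (q^2)⁻¹ := by rw [inv_pow]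
  have hq2ne0 : (q^2 : ℂ) ≠ 0 := pow_ne_zero _ hq
  have hxne1 : (q⁻¹^2 : ℂ) ≠ 1 := by
    rw [hx]
    intro h
    apply hq2
    rw [← inv_inv (q^2 : ℂ), h, inv_one]
  have hyl : ((q^2 : ℂ))^l = 1 := by rw [← pow_mul]; exact hq2l
  have hxl : ((q⁻¹^2 : ℂ))^l = 1 := by rw [hx, inv_pow, hyl, inv_one]
  have hS1 : (∑ j ∈ Finset.range l, ((q⁻¹^2 : ℂ))^j) = 0 := by
    rw [geom_sum_eq hxne1, hxl, sub_self, zero_div]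
  have hS1' : (∑ j ∈ Finset.range l, ((q^2 : ℂ))^j) = 0 := by
    rw [geom_sum_eq hq2, hyl, sub_self, zero_div]
  have hS2 : ((q + q⁻¹ : ℂ)) * (∑ j ∈ Finset.range l, (((q⁻¹^2 : ℂ))^2)^j) = 0 := by
    by_cases h4 : ((q⁻¹^2 : ℂ))^2 = 1
    · have : (q^2 : ℂ) = -1 := by
        have h4' : ((q^2 : ℂ))^2 = 1 := by
          rw [hx] at h4
          rw [← inv_inv ((q^2:ℂ)^2), ← inv_pow, h4, inv_one]
        rcases mul_eq_zero.mp (show ((q^2:ℂ) - 1) * ((q^2:ℂ) + 1) = 0 by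
            linear_combination h4') with h | h
        · exact absurd (sub_eq_zero.mp h) hq2
        · exact eq_neg_of_add_eq_zero_left h
      have : q + q⁻¹ = 0 := by
        field_simp
        linear_combination this
      rw [this, zero_mul]
    · rw [geom_sum_eq h4, ← pow_mul, mul_comm 2 l, pow_mul, hxl, one_pow, sub_self, zero_div, mul_zero]
  have hS2' : ((q + q⁻¹ : ℂ)) * (∑ j ∈ Finset.range l, (((q^2 : ℂ))^2)^j) = 0 := by
    by_cases h4 : ((q^2 : ℂ))^2 = 1
    · have h1' : (q^2 : ℂ) = -1 := by
        rcases mul_eq_zero.mp (show ((q^2:ℂ) - 1) * ((q^2:ℂ) + 1) = 0 by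
            linear_combination h4) with h | h
        · exact absurd (sub_eq_zero.mp h) hq2
        · exact eq_neg_of_add_eq_zero_left h
      have : q + q⁻¹ = 0 := by
        field_simp
        linear_combination h1'
      rw [this, zero_mul]
    · rw [geom_sum_eq h4, ← pow_mul, mul_comm 2 l, pow_mul, hyl, one_pow, sub_self, zero_div, mul_zero]
  -- the key braiding sums
  have e0 : lam • ρ0 = c • (1 : Module.End ℂ V) - A := by rw [hAc]; abel
  have hAApn : ∀ m : ℕ, (A*A) * ρp^m = (((q⁻¹^2:ℂ))^m * ((q⁻¹^2:ℂ))^m) • (ρp^m * (A*A)) := by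
    intro m
    rw [mul_assoc, hApn m, mul_smul_comm, ← mul_assoc, hApn m, smul_mul_assoc, smul_smul,
      mul_assoc]
  have hAAmn : ∀ m : ℕ, (A*A) * ρm^m = (((q^2:ℂ))^m * ((q^2:ℂ))^m) • (ρm^m * (A*A)) := by
    intro m
    rw [mul_assoc, hAmn m, mul_smul_comm, ← mul_assoc, hAmn m, smul_mul_assoc, smul_smul,
      mul_assoc]
  have hD : lam • (ρp * ρm) = lam • (ρm * ρp) + ((q+q⁻¹)*c) • A - (q+q⁻¹) • (A*A) := by
    have e1 : lam • (A * ρ0) = c • A - A * A := by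
      rw [← mul_smul_comm, e0, mul_sub, mul_smul_comm, mul_one]
    have e2 : lam • (ρp * ρm - ρm * ρp) = ((q+q⁻¹):ℂ) • (lam • (A * ρ0)) := by
      rw [h3, smul_comm]
    rw [e1] at e2
    linear_combination (norm := module) e2
  have hD' : lam • (ρm * ρp) = lam • (ρp * ρm) - ((q+q⁻¹)*c) • A + (q+q⁻¹) • (A*A) := by
    linear_combination (norm := module) -hD
  have key_p : ∀ n : ℕ, lam • (ρp^(n+1) * ρm) = lam • (ρm * ρp^(n+1))
      + ρp^n * ((((q+q⁻¹)*c) * (∑ j ∈ Finset.range (n+1), ((q⁻¹^2:ℂ))^j)) • A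
        - ((q+q⁻¹) * (∑ j ∈ Finset.range (n+1), (((q⁻¹^2:ℂ))^2)^j)) • (A*A)) := by
    intro n
    induction n with
    | zero =>
      simp only [zero_add, pow_one, pow_zero, Finset.sum_range_one, mul_one, one_mul]
      linear_combination (norm := module) hD
    | succ n ih =>
      have e1 : lam • (ρp ^ (n + 1 + 1) * ρm) = ρp * (lam • (ρp ^ (n + 1) * ρm)) := by
        rw [mul_smul_comm, ← mul_assoc, ← pow_succ']
      rw [e1, ih]
      rw [mul_add, mul_smul_comm]
      have e2 : ρp * (ρm * ρp^(n+1)) = (ρp * ρm) * ρp^(n+1) := by rw [mul_assoc]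
      rw [e2, ← smul_mul_assoc, hD]
      rw [sub_mul, add_mul, smul_mul_assoc, smul_mul_assoc, smul_mul_assoc]
      rw [hApn (n+1), hAApn (n+1)]
      have e5 : ∀ W : Module.End ℂ V, ρp * (ρp^n * W) = ρp^(n+1) * W := by
        intro W; rw [← mul_assoc, ← pow_succ']
      have e4 : (ρm*ρp)*ρp^(n+1) = ρm * ρp^(n+1+1) := by rw [mul_assoc, ← pow_succ']
      rw [e5, e4]
      simp only [mul_sub, mul_smul_comm, smul_smul, Finset.sum_range_succ, mul_add, add_mul]
      match_scalars <;> ring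
  have key_m : ∀ n : ℕ, lam • (ρm^(n+1) * ρp) = lam • (ρp * ρm^(n+1))
      - ρm^n * ((((q+q⁻¹)*c) * (∑ j ∈ Finset.range (n+1), ((q^2:ℂ))^j)) • A
        - ((q+q⁻¹) * (∑ j ∈ Finset.range (n+1), (((q^2:ℂ))^2)^j)) • (A*A)) := by
    intro n
    induction n with
    | zero =>
      simp only [zero_add, pow_one, pow_zero, Finset.sum_range_one, mul_one, one_mul]
      linear_combination (norm := module) hD'
    | succ n ih =>
      have e1 : lam • (ρm ^ (n + 1 + 1) * ρp) = ρm * (lam • (ρm ^ (n + 1) * ρp)) := by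
        rw [mul_smul_comm, ← mul_assoc, ← pow_succ']
      rw [e1, ih]
      rw [mul_sub, mul_smul_comm]
      have e2 : ρm * (ρp * ρm^(n+1)) = (ρm * ρp) * ρm^(n+1) := by rw [mul_assoc]
      rw [e2, ← smul_mul_assoc, hD']
      rw [add_mul, sub_mul, smul_mul_assoc, smul_mul_assoc, smul_mul_assoc]
      rw [hAmn (n+1), hAAmn (n+1)]
      have e5 : ∀ W : Module.End ℂ V, ρm * (ρm^n * W) = ρm^(n+1) * W := by
        intro W; rw [← mul_assoc, ← pow_succ']
      have e4 : (ρp*ρm)*ρm^(n+1) = ρp * ρm^(n+1+1) := by rw [mul_assoc, ← pow_succ']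
      rw [e5, e4]
      simp only [mul_sub, mul_smul_comm, smul_smul, Finset.sum_range_succ, mul_add, add_mul]
      match_scalars <;> ring
  have cancel : ∀ X Y : Module.End ℂ V, lam • X = lam • Y → X = Y := by
    intro X Y h'
    exact smul_right_injective (Module.End ℂ V) hlam h'
  have hpml : ρp^l * ρm = ρm * ρp^l := by
    apply cancel
    have h' := key_p (l-1)
    rw [show l - 1 + 1 = l by omega] at h'
    rw [hS1, mul_zero, hS2] at h'
    simpa using h'
  have hmpl : ρm^l * ρp = ρp * ρm^l := by
    apply cancel
    have h' := key_m (l-1)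
    rw [show l - 1 + 1 = l by omega] at h'
    rw [hS1', mul_zero, hS2'] at h'
    simpa using h'
  have h0pl : ρ0 * ρp^l = ρp^l * ρ0 := by
    apply cancel
    calc lam • (ρ0 * ρp^l) = (lam • ρ0) * ρp^l := by rw [smul_mul_assoc]
      _ = c • ρp^l - A * ρp^l := by rw [e0, sub_mul, smul_mul_assoc, one_mul]
      _ = c • ρp^l - ρp^l * A := by rw [hApn l, hxl, one_smul]
      _ = ρp^l * (c • (1:Module.End ℂ V) - A) := by
            conv_rhs => rw [mul_sub, mul_smul_comm, mul_one]
      _ = lam • (ρp^l * ρ0) := by rw [← e0, mul_smul_comm]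
  have h0ml : ρ0 * ρm^l = ρm^l * ρ0 := by
    apply cancel
    calc lam • (ρ0 * ρm^l) = (lam • ρ0) * ρm^l := by rw [smul_mul_assoc]
      _ = c • ρm^l - A * ρm^l := by rw [e0, sub_mul, smul_mul_assoc, one_mul]
      _ = c • ρm^l - ρm^l * A := by rw [hAmn l, hyl, one_smul]
      _ = ρm^l * (c • (1:Module.End ℂ V) - A) := by
            conv_rhs => rw [mul_sub, mul_smul_comm, mul_one]
      _ = lam • (ρm^l * ρ0) := by rw [← e0, mul_smul_comm]
  have hCcomm : ∀ T : Module.End ℂ V, Commute ρC T := by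
    intro T
    rw [hc]
    exact Commute.smul_left (Commute.one_left T) c
  have h0A : Commute ρ0 A := by
    rw [hAdef]
    exact (hc0.symm).sub_right ((Commute.refl ρ0).smul_right lam)
  have hApl : ρp * A^l = A^l * ρp := by
    rw [hAkp l, hxl, one_smul]
  have hAml : ρm * A^l = A^l * ρm := by
    rw [hAkm l, hyl, one_smul]
  obtain ⟨ξp, hxp⟩ := schur (ρp^l) h0pl ((Commute.refl ρp).pow_right l)
    hpml.symm (hCcomm _)
  obtain ⟨ξm, hxm⟩ := schur (ρm^l) h0ml hmpl.symm ((Commute.refl ρm).pow_right l)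
    (hCcomm _)
  obtain ⟨z, hz⟩ := schur (A^l) (h0A.pow_right l) hApl hAml (hCcomm _)
  -- choose u with u + u⁻¹ = (q+q⁻¹)c
  obtain ⟨s, hs⟩ := IsAlgClosed.exists_pow_nat_eq (((q+q⁻¹)*c)^2 - 4 : ℂ) (n := 2) (by norm_num)
  set b : ℂ := (q+q⁻¹)*c with hbdef
  set u : ℂ := (b + s)/2 with hudef
  have hu : u*u - b*u + 1 = 0 := by
    have e : u*u - b*u + 1 = (s^2 - (b^2 - 4))/4 := by rw [hudef]; ring
    rw [e, hs]; ring
  have hu0 : u ≠ 0 := by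
    intro h
    rw [h] at hu
    norm_num at hu
  have huinv : u⁻¹ = b - u := by
    have h' : u * (b - u) = 1 := by linear_combination -hu
    exact inv_eq_of_mul_eq_one_right h'
  have hbu : u + u⁻¹ = b := by rw [huinv]; ring
  have hQb : Q.eval b = u^l + (u⁻¹)^l := by rw [← hbu]; exact hQ u hu0
  have huu : u * u⁻¹ = 1 := mul_inv_cancel₀ hu0
  have hprim : IsPrimitiveRoot (q^2 : ℂ) l := by
    refine ⟨hyl, ?_⟩
    intro m hm
    by_contra hnd
    have h0' : 0 < m % l := Nat.pos_of_ne_zero (fun h => hnd (Nat.dvd_of_mod_eq_zero h))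
    have hml : m % l < l := Nat.mod_lt _ (by omega)
    apply hmin _ h0' hml
    rw [← Nat.div_add_mod m l] at hm
    rw [pow_add, pow_mul, hyl, one_pow, one_mul] at hm
    rw [pow_mul]
    exact hm
  have hfac : ∀ α x : ℂ, x^l - α^l = ∏ j ∈ Finset.range l, (x - (q^2)^j * α) := by
    intro α x
    have h' := X_pow_sub_C_eq_prod hprim (show 0 < l by omega) (rfl : α^l = α^l)
    have h'' := congrArg (Polynomial.eval x) h'
    simpa [Polynomial.eval_prod] using h''
  set Ppoly : Polynomial ℂ := Polynomial.C ((1+q⁻¹^2)*c) * Polynomial.X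
      - Polynomial.C (q⁻¹^2) * Polynomial.X^2 - 1 with hPdef
  have haevalP : Polynomial.aeval A Ppoly = ((1+q⁻¹^2)*c) • A - (q⁻¹^2) • (A*A) - 1 := by
    rw [hPdef]
    simp only [map_sub, map_mul, map_one, Polynomial.aeval_X, Polynomial.aeval_C, map_pow,
      Algebra.algebraMap_eq_smul_one, smul_mul_assoc, one_mul, pow_two, smul_smul]
  have hF' : (lam^2 : ℂ) • (ρm * ρp) = (c*c) • (1:Module.End ℂ V) - 1
      - (lam^2*(q⁻¹*c)) • ρ0 - (lam^2*(q⁻¹^2)) • (ρ0*ρ0) := by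
    have hF2 := hF
    rw [hc] at hF2
    simp only [smul_mul_assoc, mul_smul_comm, one_mul, mul_one, smul_smul] at hF2
    linear_combination (norm := module) -hF2
  have hmp : (lam^2 : ℂ) • (ρm * ρp) = Polynomial.aeval A Ppoly := by
    rw [haevalP, hF', hAc]
    simp only [sub_mul, mul_sub, smul_mul_assoc, mul_smul_comm, one_mul, mul_one, smul_smul,
      smul_sub]
    have hqq : q * q⁻¹ = 1 := mul_inv_cancel₀ hq
    match_scalars
    · ring
    · simp only [hlamdef]
      linear_combination (-(c*(q-q⁻¹))) * hqq
    · simp only [hlamdef]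
      ring
  have swap : ∀ f : Polynomial ℂ, (Polynomial.aeval A f) * ρp
      = ρp * Polynomial.aeval A (f.comp (Polynomial.C (q⁻¹^2 : ℂ) * Polynomial.X)) := by
    intro f
    induction f using Polynomial.induction_on' with
    | add p r hp hr => rw [map_add, add_mul, hp, hr, Polynomial.add_comp, map_add, mul_add]
    | monomial n a =>
      simp only [Polynomial.aeval_monomial, Polynomial.monomial_comp, map_mul, map_pow,
        Polynomial.aeval_C, Polynomial.aeval_X, Algebra.algebraMap_eq_smul_one, smul_mul_assoc,
        one_mul, one_pow, mul_pow, smul_pow, smul_smul, mul_smul_comm]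
      rw [hAkp n]
      match_scalars <;> ring
  have swapn : ∀ n : ℕ, ∀ f : Polynomial ℂ, (Polynomial.aeval A f) * ρp^n
      = ρp^n * Polynomial.aeval A (f.comp (Polynomial.C (((q⁻¹^2:ℂ))^n) * Polynomial.X)) := by
    intro n
    induction n with
    | zero =>
      intro f
      simp [Polynomial.comp_X]
    | succ n ih =>
      intro f
      have hcomp : (Polynomial.C ((q⁻¹^2:ℂ)^n) * Polynomial.X).comp
          (Polynomial.C ((q⁻¹^2:ℂ)) * Polynomial.X)
          = Polynomial.C ((q⁻¹^2:ℂ)^(n+1)) * Polynomial.X := by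
        simp only [Polynomial.mul_comp, Polynomial.C_comp, Polynomial.X_comp]
        rw [← mul_assoc, ← Polynomial.C_mul, mul_comm ((q⁻¹^2:ℂ)^n), ← pow_succ']
      calc (Polynomial.aeval A f) * ρp^(n+1)
          = ((Polynomial.aeval A f) * ρp^n) * ρp := by rw [pow_succ, mul_assoc]
        _ = ρp^n * ((Polynomial.aeval A (f.comp (Polynomial.C (((q⁻¹^2:ℂ))^n) * Polynomial.X))) * ρp) := by
            rw [ih f, mul_assoc]
        _ = ρp^(n+1) * Polynomial.aeval A ((f.comp (Polynomial.C (((q⁻¹^2:ℂ))^n) * Polynomial.X)).comp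
            (Polynomial.C ((q⁻¹^2:ℂ)) * Polynomial.X)) := by
            rw [swap, ← mul_assoc, ← pow_succ]
        _ = ρp^(n+1) * Polynomial.aeval A (f.comp (Polynomial.C (((q⁻¹^2:ℂ))^(n+1)) * Polynomial.X)) := by
            rw [Polynomial.comp_assoc, hcomp]
  have main : ∀ n : ℕ, ((lam^2 : ℂ))^n • (ρm^n * ρp^n)
      = Polynomial.aeval A (∏ j ∈ Finset.range n,
          Ppoly.comp (Polynomial.C (((q⁻¹^2:ℂ))^j) * Polynomial.X)) := by
    intro n
    induction n with
    | zero => simp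
    | succ n ih =>
      have ee : ρm^(n+1) * ρp^(n+1) = ρm^n * ((ρm * ρp) * ρp^n) := by
        rw [pow_succ, pow_succ', mul_assoc, ← mul_assoc ρm ρp (ρp^n)]
      calc ((lam^2:ℂ))^(n+1) • (ρm^(n+1) * ρp^(n+1))
          = ((lam^2:ℂ))^n • (ρm^n * (((lam^2:ℂ) • (ρm * ρp)) * ρp^n)) := by
            rw [ee, smul_mul_assoc, mul_smul_comm, smul_smul, ← pow_succ]
        _ = ((lam^2:ℂ))^n • (ρm^n * (ρp^n * Polynomial.aeval A (Ppoly.comp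
            (Polynomial.C (((q⁻¹^2:ℂ))^n) * Polynomial.X)))) := by
            rw [hmp, swapn n Ppoly]
        _ = (((lam^2:ℂ))^n • (ρm^n * ρp^n)) * Polynomial.aeval A (Ppoly.comp
            (Polynomial.C (((q⁻¹^2:ℂ))^n) * Polynomial.X)) := by
            rw [smul_mul_assoc, mul_assoc]
        _ = Polynomial.aeval A (∏ j ∈ Finset.range (n+1),
            Ppoly.comp (Polynomial.C (((q⁻¹^2:ℂ))^j) * Polynomial.X)) := by
            rw [ih, ← map_mul, Finset.prod_range_succ]
  -- the polynomial product identity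
  have hqli : (q:ℂ)^l * q^l = 1 := by
    rw [← pow_add, ← two_mul]
    exact hq2l
  have hull : u^l * (u⁻¹)^l = 1 := by rw [← mul_pow, huu, one_pow]
  have hP : ∀ y : ℂ, Ppoly.eval y = -q⁻¹^2 * ((y - q*u) * (y - q*u⁻¹)) := by
    intro y
    rw [hPdef]
    simp only [Polynomial.eval_sub, Polynomial.eval_mul, Polynomial.eval_C, Polynomial.eval_X,
      Polynomial.eval_pow, Polynomial.eval_one]
    have := aux_quad q c u y hq hu0 (by rw [hbu, hbdef])
    linear_combination this
  have hpoly : (∏ j ∈ Finset.range l, Ppoly.comp (Polynomial.C (((q⁻¹^2:ℂ))^j) * Polynomial.X))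
      = Polynomial.C ((-1:ℂ)^l) * (Polynomial.X^(2*l)
        - Polynomial.C (q^l * Q.eval b) * Polynomial.X^l + 1) := by
    apply Polynomial.funext
    intro x
    rw [Polynomial.eval_prod]
    simp only [Polynomial.eval_comp, Polynomial.eval_mul, Polynomial.eval_C, Polynomial.eval_X,
      Polynomial.eval_add, Polynomial.eval_sub, Polynomial.eval_pow, Polynomial.eval_one]
    have step1 : ∀ j ∈ Finset.range l, Ppoly.eval ((((q⁻¹^2:ℂ))^j) * x)
        = ((-q⁻¹^2 * (((q⁻¹^2:ℂ))^j)^2) * ((x - (q^2)^j*(q*u)) * (x - (q^2)^j*(q*u⁻¹)))) := by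
      intro j _
      rw [hP]
      have hw : ((q⁻¹^2:ℂ))^j * ((q^2:ℂ))^j = 1 := by
        rw [← mul_pow]
        have : (q⁻¹^2 * q^2 : ℂ) = 1 := by
          rw [inv_pow]
          exact inv_mul_cancel₀ hq2ne0
        rw [this, one_pow]
      exact aux_factor (q⁻¹^2) (((q⁻¹^2:ℂ))^j) (((q^2:ℂ))^j) x (q*u) (q*u⁻¹) hw
    rw [Finset.prod_congr rfl step1]
    rw [Finset.prod_mul_distrib, Finset.prod_mul_distrib, Finset.prod_mul_distrib,
      Finset.prod_const, Finset.card_range, Finset.prod_pow, Finset.prod_pow_eq_pow_sum]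
    have hsum : (((q⁻¹^2:ℂ))^(∑ j ∈ Finset.range l, j))^2 = 1 := by
      rw [← pow_mul, Finset.sum_range_id_mul_two l, pow_mul, hxl, one_pow]
    rw [hsum, mul_one, ← hfac (q*u) x, ← hfac (q*u⁻¹) x]
    have hneg : ((-q⁻¹^2 : ℂ))^l = (-1:ℂ)^l := by
      rw [neg_pow, hxl, mul_one]
    rw [hneg, hQb]
    rw [mul_pow q u l, mul_pow q u⁻¹ l]
    rw [two_mul l, pow_add]
    ring_nf
    linear_combination ((-1:ℂ)^l * (q^l*q^l)) * hull + ((-1:ℂ)^l) * hqli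
  -- assemble
  have final := main l
  rw [hpoly] at final
  rw [hxp, hxm] at final
  simp only [map_mul, map_add, map_sub, map_one, map_pow, Polynomial.aeval_X, Polynomial.aeval_C,
    Algebra.algebraMap_eq_smul_one] at final
  rw [pow_mul' A 2 l, hz] at final
  simp only [smul_pow, one_pow, smul_mul_assoc, mul_smul_comm, smul_smul, one_mul, mul_one]
    at final
  have eq2 : (((lam^2:ℂ))^l * (ξm * ξp)) • (1 : Module.End ℂ V)
      = ((-1:ℂ)^l * (z^2 - q^l * Q.eval b * z + 1)) • (1 : Module.End ℂ V) := by
    linear_combination (norm := module) final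
  have e := scal_inj _ _ eq2
  -- final scalar computation
  have hK : ((lam^2:ℂ))^l ≠ 0 := pow_ne_zero _ (pow_ne_zero _ hlam)
  have hKK : ((lam^2:ℂ))^l * (((lam^2:ℂ))^l)⁻¹ = 1 := mul_inv_cancel₀ hK
  have hsl : (q:ℂ)^l = 1 ∨ (q:ℂ)^l = -1 := by
    rcases mul_eq_zero.mp (show ((q:ℂ)^l - 1) * ((q:ℂ)^l + 1) = 0 by linear_combination hqli)
      with h | h
    · exact Or.inl (sub_eq_zero.mp h)
    · exact Or.inr (eq_neg_of_add_eq_zero_left h)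
  have hqle : (q:ℂ)^(l*(l-1)) = ((q:ℂ)^l)^(l-1) := by rw [pow_mul]
  have hqinvl : (q⁻¹:ℂ)^l = ((q:ℂ)^l)⁻¹ := by rw [inv_pow]
  have key : q^(l*(l-1)) * (-1 + q⁻¹^l * Q.eval b * z - z^2)
      = (-1:ℂ)^l * (z^2 - q^l * Q.eval b * z + 1) := by
    rcases hsl with h | h
    · have hodd : Odd l := by
        rcases Nat.even_or_odd l with he | ho
        · exfalso
          obtain ⟨m, hm⟩ := he
          have h0m : 0 < m := by omega
          have hml : m < l := by omega
          apply hmin m h0m hml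
          rw [show 2*m = l by omega]
          exact h
        · exact ho
      rw [hqle, h, one_pow, hqinvl, h, inv_one, hodd.neg_one_pow]
      ring
    · rw [hqle, h, hqinvl, h, inv_neg_one]
      obtain ⟨n, hn⟩ : ∃ n, l = n + 1 := ⟨l-1, by omega⟩
      rw [hn]
      simp only [Nat.add_sub_cancel]
      rw [pow_succ]
      ring
  refine ⟨c, ξp, ξm, z, hc, hxp, hxm, hz, ?_⟩
  rw [show (lam:ℂ)^(2*l) = ((lam^2:ℂ))^l by rw [pow_mul]]
  apply mul_left_cancel₀ hK
  rw [e, ← key]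
  linear_combination (-(q^(l*(l-1)) * (-1 + q⁻¹^l * Q.eval b * z - z^2))) * hKK

end SL2q
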